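/- For every natural number n, the commutator uₙ = [kⁿ, θ1ⁿθ2⁻ⁿ] = k⁻ⁿ (θ1ⁿθ2⁻ⁿ)⁻¹ kⁿ (θ1ⁿθ2⁻ⁿ) equals the identity in G. -/

import Mathlib

def theta1 : FreeGroup (Fin 4) := FreeGroup.of 0
def theta2 : FreeGroup (Fin 4) := FreeGroup.of 1
def aF : FreeGroup (Fin 4) := FreeGroup.of 2
def kF : FreeGroup (Fin 4) := FreeGroup.of 3

def rels : Set (FreeGroup (Fin 4)) :=
  {theta1⁻¹ * aF * theta1 * aF⁻¹, theta2⁻¹ * aF * theta2 * aF⁻¹,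
   theta1⁻¹ * kF * theta1 * aF⁻¹ * kF⁻¹, theta2⁻¹ * kF * theta2 * aF⁻¹ * kF⁻¹}

abbrev G : Type := PresentedGroup rels

def π : FreeGroup (Fin 4) →* G := PresentedGroup.mk rels

lemma pi_rel {r : FreeGroup (Fin 4)} (h : r ∈ rels) : π r = 1 := by
  have : r ∈ Subgroup.normalClosure rels := Subgroup.subset_normalClosure h
  exact (QuotientGroup.eq_one_iff r).mpr this

lemma rel1 : π theta1⁻¹ * π aF * π theta1 = π aF := by
  have := pi_rel (r := theta1⁻¹ * aF * theta1 * aF⁻¹) (by left; rfl)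
  simp only [map_mul, map_inv] at this
  rw [mul_inv_eq_one] at this
  simpa using this

lemma rel2 : π theta2⁻¹ * π aF * π theta2 = π aF := by
  have := pi_rel (r := theta2⁻¹ * aF * theta2 * aF⁻¹) (by right; left; rfl)
  simp only [map_mul, map_inv] at this
  rw [mul_inv_eq_one] at this
  simpa using this

lemma rel3 : π theta1⁻¹ * π kF * π theta1 = π kF * π aF := by
  have := pi_rel (r := theta1⁻¹ * kF * theta1 * aF⁻¹ * kF⁻¹) (by right; right; left; rfl)
  simp only [map_mul, map_inv] at this
  have h : π theta1⁻¹ * π kF * π theta1 * π aF⁻¹ = π kF := by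
    rwa [mul_inv_eq_one] at this
  calc π theta1⁻¹ * π kF * π theta1
      = (π theta1⁻¹ * π kF * π theta1 * π aF⁻¹) * π aF := by simp [mul_assoc]
    _ = π kF * π aF := by rw [h]

lemma rel4 : π theta2⁻¹ * π kF * π theta2 = π kF * π aF := by
  have := pi_rel (r := theta2⁻¹ * kF * theta2 * aF⁻¹ * kF⁻¹) (by right; right; right; rfl)
  simp only [map_mul, map_inv] at this
  have h : π theta2⁻¹ * π kF * π theta2 * π aF⁻¹ = π kF := by
    rwa [mul_inv_eq_one] at this
  calc π theta2⁻¹ * π kF * π theta2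
      = (π theta2⁻¹ * π kF * π theta2 * π aF⁻¹) * π aF := by simp [mul_assoc]
    _ = π kF * π aF := by rw [h]

-- a commutes with θ₁, θ₂
lemma comm1 : Commute (π aF) (π theta1) := by
  have := congrArg (fun x => π theta1 * x) rel1
  exact (by simpa [mul_assoc] using this : π aF * π theta1 = π theta1 * π aF)

lemma comm2 : Commute (π aF) (π theta2) := by
  have := congrArg (fun x => π theta2 * x) rel2
  exact (by simpa [mul_assoc] using this : π aF * π theta2 = π theta2 * π aF)

-- θᵢ⁻ⁿ k θᵢⁿ = k aⁿ
lemma conj1 (n : ℕ) : (π theta1)⁻¹ ^ n * π kF * π theta1 ^ n = π kF * π aF ^ n := by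
  induction n with
  | zero => simp
  | succ m ih =>
    have ha : Commute (π aF ^ m) (π theta1) := (comm1.pow_left m)
    calc (π theta1)⁻¹ ^ (m+1) * π kF * π theta1 ^ (m+1)
        = (π theta1)⁻¹ * ((π theta1)⁻¹ ^ m * π kF * π theta1 ^ m) * π theta1 := by
          rw [pow_succ' (π theta1)⁻¹, pow_succ]; group
      _ = (π theta1)⁻¹ * (π kF * π aF ^ m) * π theta1 := by rw [ih]
      _ = ((π theta1)⁻¹ * π kF * π theta1) * ((π theta1)⁻¹ * π aF ^ m * π theta1) := by group
      _ = (π kF * π aF) * π aF ^ m := by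
          have r3 := rel3; rw [map_inv] at r3; rw [r3]
          congr 1
          rw [mul_assoc, ha.eq]; group
      _ = π kF * π aF ^ (m+1) := by rw [pow_succ']; group

lemma conj2 (n : ℕ) : (π theta2)⁻¹ ^ n * π kF * π theta2 ^ n = π kF * π aF ^ n := by
  induction n with
  | zero => simp
  | succ m ih =>
    have ha : Commute (π aF ^ m) (π theta2) := (comm2.pow_left m)
    calc (π theta2)⁻¹ ^ (m+1) * π kF * π theta2 ^ (m+1)
        = (π theta2)⁻¹ * ((π theta2)⁻¹ ^ m * π kF * π theta2 ^ m) * π theta2 := by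
          rw [pow_succ' (π theta2)⁻¹, pow_succ]; group
      _ = (π theta2)⁻¹ * (π kF * π aF ^ m) * π theta2 := by rw [ih]
      _ = ((π theta2)⁻¹ * π kF * π theta2) * ((π theta2)⁻¹ * π aF ^ m * π theta2) := by group
      _ = (π kF * π aF) * π aF ^ m := by
          have r4 := rel4; rw [map_inv] at r4; rw [r4]
          congr 1
          rw [mul_assoc, ha.eq]; group
      _ = π kF * π aF ^ (m+1) := by rw [pow_succ']; group

lemma key (n : ℕ) : Commute (π kF) (π theta1 ^ n * (π theta2 ^ n)⁻¹) := by
  have h1 := conj1 n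
  have h2 := conj2 n
  rw [inv_pow] at h1 h2
  have e1 : π kF * π theta1 ^ n = π theta1 ^ n * (π kF * π aF ^ n) := by
    rw [← h1]; group
  have e2 : π kF * π theta2 ^ n = π theta2 ^ n * (π kF * π aF ^ n) := by
    rw [← h2]; group
  have e2' : (π kF * π aF ^ n) * (π theta2 ^ n)⁻¹ = (π theta2 ^ n)⁻¹ * π kF := by
    rw [eq_comm, inv_mul_eq_iff_eq_mul, ← mul_assoc, ← e2, mul_assoc, mul_inv_cancel, mul_one]
  show π kF * _ = _ * π kF
  calc π kF * (π theta1 ^ n * (π theta2 ^ n)⁻¹)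
      = (π kF * π theta1 ^ n) * (π theta2 ^ n)⁻¹ := by rw [mul_assoc]
    _ = π theta1 ^ n * ((π kF * π aF ^ n) * (π theta2 ^ n)⁻¹) := by rw [e1]; group
    _ = π theta1 ^ n * ((π theta2 ^ n)⁻¹ * π kF) := by rw [e2']
    _ = (π theta1 ^ n * (π theta2 ^ n)⁻¹) * π kF := by rw [mul_assoc]

/-- The commutator `uₙ = [kⁿ, θ₁ⁿθ₂⁻ⁿ]` is trivial in `G`, for every `n`. -/
theorem commutator_trivial (n : ℕ) :
    (π kF ^ n)⁻¹ * (π theta1 ^ n * (π theta2 ^ n)⁻¹)⁻¹ * π kF ^ n *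
      (π theta1 ^ n * (π theta2 ^ n)⁻¹) = 1 := by
  have h := (key n).pow_left n
  rw [mul_assoc, mul_assoc, h.eq]
  group
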